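/- Let F : [0,∞) → ℝ satisfy F(0) = 1 and F(r) → 0 as r → ∞, and suppose K(x,y) = F(|x−y|) is positive semidefinite on ℝ × ℝ. Let μ be a finite Borel measure on ℝ, let λ_k ≥ 0, and let ψ_k : ℝ → ℝ be functions that are orthonormal in L²(μ) and satisfy K(x,y) = Σ_k λ_k ψ_k(x) ψ_k(y) pointwise for all x, y ∈ ℝ. Then the ψ_k are not uniformly bounded: there is no constant M < ∞ with |ψ_k(x)| ≤ M for all k and all x ∈ ℝ. -/

import Mathlib

open Filter MeasureTheory Finset

theorem rbf_mercer_eigenfunctions_not_uniformly_bounded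
    (F : ℝ → ℝ) (hF0 : F 0 = 1) (hFlim : Tendsto F atTop (nhds 0))
    (K : ℝ → ℝ → ℝ) (hK : ∀ x y, K x y = F |x - y|)
    (hPSD : ∀ (n : ℕ) (x a : Fin n → ℝ),
      0 ≤ ∑ i, ∑ j, a i * a j * K (x i) (x j))
    (μ : Measure ℝ) [IsFiniteMeasure μ]
    (lam : ℕ → ℝ) (hlam : ∀ k, 0 ≤ lam k)
    (ψ : ℕ → ℝ → ℝ)
    (horth : ∀ k h : ℕ, ∫ x, ψ k x * ψ h x ∂μ = if k = h then 1 else 0)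
    (hexp : ∀ x y : ℝ, HasSum (fun k : ℕ => lam k * ψ k x * ψ k y) (K x y)) :
    ¬ ∃ M : ℝ, ∀ (k : ℕ) (x : ℝ), |ψ k x| ≤ M := by
  rintro ⟨M, hM⟩
  set M' : ℝ := |M| + 1 with hM'def
  have hM'pos : (0:ℝ) < M' := by positivity
  have hψle : ∀ k x, |ψ k x| ≤ M' := fun k x =>
    (hM k x).trans (by nlinarith [le_abs_self M])
  -- K on diagonal is 1
  have hKdiag : ∀ z : ℝ, K z z = 1 := by
    intro z; rw [hK, sub_self, abs_zero, hF0]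
  have hdiag : ∀ z, HasSum (fun k => lam k * ψ k z * ψ k z) 1 := by
    intro z; have := hexp z z; rwa [hKdiag] at this
  have hnn : ∀ k z, 0 ≤ lam k * ψ k z * ψ k z := by
    intro k z; rw [mul_assoc]; exact mul_nonneg (hlam k) (mul_self_nonneg _)
  -- integrability
  have hInt : ∀ k, Integrable (fun x => ψ k x * ψ k x) μ := by
    intro k
    by_contra h
    have h1 := horth k k
    rw [integral_undef h] at h1
    simp at h1
  -- summability of lam
  have hpartial : ∀ n : ℕ, ∑ k ∈ range n, lam k ≤ (μ Set.univ).toReal := by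
    intro n
    have h1 : ∀ z : ℝ, ∑ k ∈ range n, lam k * (ψ k z * ψ k z) ≤ 1 := by
      intro z
      have := sum_le_hasSum (range n) (fun k _ => hnn k z) (hdiag z)
      simpa [mul_assoc] using this
    have hIntSum : Integrable (fun z => ∑ k ∈ range n, lam k * (ψ k z * ψ k z)) μ :=
      integrable_finset_sum _ (fun k _ => (hInt k).const_mul (lam k))
    calc ∑ k ∈ range n, lam k
        = ∑ k ∈ range n, lam k * ∫ x, ψ k x * ψ k x ∂μ := by
          simp [horth]
      _ = ∫ x, ∑ k ∈ range n, lam k * (ψ k x * ψ k x) ∂μ := by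
          rw [integral_finset_sum _ (fun k _ => (hInt k).const_mul (lam k))]
          simp [integral_const_mul]
      _ ≤ ∫ _x, (1:ℝ) ∂μ := integral_mono hIntSum (integrable_const 1) h1
      _ = (μ Set.univ).toReal := by simp; rfl
  have hlamsum : Summable lam := summable_of_sum_range_le hlam hpartial
  set S : ℝ := ∑' k, lam k with hSdef
  -- choose N with small tail
  have htend : Tendsto (fun n => ∑ k ∈ range n, lam k) atTop (nhds S) :=
    hlamsum.hasSum.tendsto_sum_nat
  obtain ⟨N, hN⟩ := (Metric.tendsto_atTop.mp htend (1 / (8 * M' ^ 2)) (by positivity))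
  have hNtail : S - ∑ k ∈ range N, lam k < 1 / (8 * M' ^ 2) := by
    have := hN N le_rfl
    rw [Real.dist_eq] at this
    have h2 := abs_lt.mp this
    linarith [h2.1]
  have hNtail0 : 0 ≤ S - ∑ k ∈ range N, lam k := by
    have := Summable.sum_le_tsum (range N) (fun k _ => hlam k) hlamsum
    linarith
  -- tail bound for all x y
  have htail : ∀ x y : ℝ, |∑' k, lam (k + N) * ψ (k + N) x * ψ (k + N) y| < 1/8 := by
    intro x y
    have hfs : Summable (fun k => lam (k + N) * ψ (k + N) x * ψ (k + N) y) :=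
      ((summable_nat_add_iff N).mpr (hexp x y).summable)
    have hbs : Summable (fun k : ℕ => lam (k + N) * M' ^ 2) :=
      (((summable_nat_add_iff N).mpr hlamsum)).mul_right _
    have hb : ∀ k : ℕ, |lam (k + N) * ψ (k + N) x * ψ (k + N) y| ≤ lam (k + N) * M' ^ 2 := by
      intro k
      rw [abs_mul, abs_mul, abs_of_nonneg (hlam _)]
      calc lam (k + N) * |ψ (k + N) x| * |ψ (k + N) y|
          ≤ lam (k + N) * M' * M' := by
            apply mul_le_mul (mul_le_mul_of_nonneg_left (hψle _ _) (hlam _)) (hψle _ _)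
              (abs_nonneg _) (mul_nonneg (hlam _) hM'pos.le)
        _ = lam (k + N) * M' ^ 2 := by ring
    have habs : Summable (fun k => |lam (k + N) * ψ (k + N) x * ψ (k + N) y|) := hfs.abs
    have hnorm : Summable (fun k => ‖lam (k + N) * ψ (k + N) x * ψ (k + N) y‖) := by
      simp only [Real.norm_eq_abs]; exact habs
    have h1a : |∑' k, lam (k + N) * ψ (k + N) x * ψ (k + N) y|
        ≤ ∑' k, |lam (k + N) * ψ (k + N) x * ψ (k + N) y| := by
      have := norm_tsum_le_tsum_norm hnorm
      simp only [Real.norm_eq_abs] at this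
      exact this
    have h1 : |∑' k, lam (k + N) * ψ (k + N) x * ψ (k + N) y|
        ≤ ∑' k : ℕ, lam (k + N) * M' ^ 2 :=
      h1a.trans (Summable.tsum_le_tsum hb habs hbs)
    have h2 : ∑' k : ℕ, lam (k + N) * M' ^ 2 = (S - ∑ k ∈ range N, lam k) * M' ^ 2 := by
      rw [tsum_mul_right]
      congr 1
      have := Summable.sum_add_tsum_nat_add N hlamsum
      linarith
    rw [h2] at h1
    have : (S - ∑ k ∈ range N, lam k) * M' ^ 2 < 1/8 := by
      have hMp : (0:ℝ) < M' ^ 2 := by positivity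
      calc (S - ∑ k ∈ range N, lam k) * M' ^ 2 < (1 / (8 * M' ^ 2)) * M' ^ 2 := by
            exact mul_lt_mul_of_pos_right hNtail hMp
        _ = 1/8 := by field_simp
    exact lt_of_le_of_lt h1 this
  -- sum split
  have hsplit : ∀ x y : ℝ, ∑ k ∈ range N, lam k * ψ k x * ψ k y
      = K x y - ∑' k, lam (k + N) * ψ (k + N) x * ψ (k + N) y := by
    intro x y
    have h1 := Summable.sum_add_tsum_nat_add N (hexp x y).summable
    rw [(hexp x y).tsum_eq] at h1
    linarith
  have hdiagLB : ∀ z : ℝ, 7/8 ≤ ∑ k ∈ range N, lam k * ψ k z * ψ k z := by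
    intro z
    have h1 := hsplit z z
    have h2 := htail z z
    rw [hKdiag] at h1
    have := abs_lt.mp h2
    linarith [this.1, this.2]
  -- far-apart points
  obtain ⟨T, hT⟩ : ∃ T : ℝ, ∀ r ≥ T, |F r| < 1/8 := by
    have := Metric.tendsto_nhds.mp hFlim (1/8) (by norm_num)
    obtain ⟨T, hT⟩ := eventually_atTop.mp this
    exact ⟨T, fun r hr => by simpa [Real.dist_eq] using hT r hr⟩
  set T' : ℝ := max T 1 with hT'def
  set pt : ℕ → ℝ := fun i => (i : ℝ) * T' with hptdef
  have hfar : ∀ i j : ℕ, i ≠ j → T ≤ |pt i - pt j| := by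
    intro i j hne
    have h1 : (1:ℝ) ≤ |(i:ℝ) - (j:ℝ)| := by
      have hz : ((i:ℤ) - (j:ℤ)) ≠ 0 := sub_ne_zero.mpr (by exact_mod_cast hne)
      have := Int.one_le_abs hz
      have h2 : (1:ℝ) ≤ |((i:ℤ) - (j:ℤ) : ℤ)| := by exact_mod_cast this
      calc (1:ℝ) ≤ ((|(i:ℤ) - (j:ℤ)| : ℤ) : ℝ) := by exact_mod_cast this
        _ = |((i:ℤ) : ℝ) - ((j:ℤ) : ℝ)| := by rw [Int.cast_abs, Int.cast_sub]
        _ = |(i:ℝ) - (j:ℝ)| := by push_cast; ring_nf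
    have hT'1 : (1:ℝ) ≤ T' := le_max_right T 1
    have hTT' : T ≤ T' := le_max_left T 1
    have : pt i - pt j = ((i:ℝ) - j) * T' := by simp [hptdef]; ring
    rw [this, abs_mul, abs_of_nonneg (by linarith : (0:ℝ) ≤ T')]
    nlinarith
  have hcross : ∀ i j : ℕ, i ≠ j →
      ∑ k ∈ range N, lam k * ψ k (pt i) * ψ k (pt j) ≤ 1/4 := by
    intro i j hne
    have h1 := hsplit (pt i) (pt j)
    have h2 := htail (pt i) (pt j)
    have hKb : |K (pt i) (pt j)| < 1/8 := by
      rw [hK]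
      exact hT _ (hfar i j hne)
    have := abs_lt.mp h2
    have := abs_lt.mp hKb
    linarith [(abs_lt.mp h2).1, (abs_lt.mp h2).2, (abs_lt.mp hKb).1, (abs_lt.mp hKb).2]
  -- Euclidean vectors
  set E := EuclideanSpace ℝ (Fin N) with hEdef
  set w : ℕ → E := fun i => WithLp.toLp 2 (fun k : Fin N => Real.sqrt (lam k) * ψ k (pt i)) with hwdef
  have hinner : ∀ i j : ℕ, (inner ℝ (w i) (w j) : ℝ)
      = ∑ k ∈ range N, lam k * ψ k (pt i) * ψ k (pt j) := by
    intro i j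
    rw [PiLp.inner_apply]
    rw [← Fin.sum_univ_eq_sum_range (fun k => lam k * ψ k (pt i) * ψ k (pt j)) N]
    apply Finset.sum_congr rfl
    intro k _
    simp only [hwdef, PiLp.toLp_apply, RCLike.inner_apply, conj_trivial]
    rw [show Real.sqrt (lam k) * ψ k (pt j) * (Real.sqrt (lam k) * ψ k (pt i))
        = (Real.sqrt (lam k) * Real.sqrt (lam k)) * (ψ k (pt i) * ψ k (pt j)) by ring,
      Real.mul_self_sqrt (hlam k)]
    ring
  have hnormw : ∀ i, ‖w i‖ ≤ 1 := by
    intro i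
    have h1 : (inner ℝ (w i) (w i) : ℝ) ≤ 1 := by
      rw [hinner]
      have := sum_le_hasSum (range N) (fun k _ => hnn k (pt i)) (hdiag (pt i))
      simpa using this
    rw [real_inner_self_eq_norm_sq] at h1
    nlinarith [norm_nonneg (w i)]
  -- compactness
  have hball : ∀ i, w i ∈ Metric.closedBall (0:E) 1 := by
    intro i
    rw [Metric.mem_closedBall, dist_zero_right]
    exact hnormw i
  obtain ⟨a, -, φ, hφ, hconv⟩ :=
    (isCompact_closedBall (0:E) 1).tendsto_subseq hball
  obtain ⟨n₀, hn₀⟩ := Metric.cauchySeq_iff.mp hconv.cauchySeq (1/4) (by norm_num)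
  set i := φ n₀ with hidef
  set j := φ (n₀ + 1) with hjdef
  have hij : i ≠ j := ne_of_lt (hφ (Nat.lt_succ_self n₀))
  have hdistij : ‖w i - w j‖ < 1/4 := by
    have := hn₀ n₀ le_rfl (n₀ + 1) (Nat.le_succ n₀)
    rwa [Function.comp_apply, Function.comp_apply, dist_eq_norm] at this
  have h1 : (7:ℝ)/8 ≤ (inner ℝ (w i) (w i) : ℝ) := by rw [hinner]; exact hdiagLB (pt i)
  have h2 : (inner ℝ (w i) (w j) : ℝ) ≤ 1/4 := by rw [hinner]; exact hcross i j hij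
  have h3 : (inner ℝ (w i) (w i - w j) : ℝ) ≤ ‖w i‖ * ‖w i - w j‖ := real_inner_le_norm _ _
  have h5 : (inner ℝ (w i) (w j) : ℝ) = (inner ℝ (w i) (w i) : ℝ) - (inner ℝ (w i) (w i - w j) : ℝ) := by
    rw [inner_sub_right]; ring
  nlinarith [norm_nonneg (w i), norm_nonneg (w i - w j), hnormw i]
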